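/- Let k > 0. The inequality (k·(log t)² + 1) − ((t+1)/(t−1))·log t + 1 ≥ 0 holds for every t ∈ (0, ∞) with t ≠ 1 if and only if k ≥ 1/6. -/

import Mathlib

open Real

private lemma nonneg_of_hasDerivAt {f f' : ℝ → ℝ}
    (hd : ∀ x, HasDerivAt f (f' x) x) (h0 : f 0 = 0)
    (hf' : ∀ x, 0 ≤ x → 0 ≤ f' x) : ∀ x, 0 ≤ x → 0 ≤ f x := by
  intro x hx
  have mono : MonotoneOn f (Set.Ici (0:ℝ)) := by
    apply monotoneOn_of_deriv_nonneg (convex_Ici 0)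
      (fun y _ => (hd y).continuousAt.continuousWithinAt)
      (fun y _ => (hd y).differentiableAt.differentiableWithinAt)
    intro y hy
    rw [(hd y).deriv]
    rw [interior_Ici] at hy
    exact hf' y (le_of_lt hy)
  have h := mono Set.self_mem_Ici hx hx
  rw [h0] at h
  exact h

/-- `h s = (s²/6+2)(eˢ−1) − s(eˢ+1) ≥ 0` for `s ≥ 0`. -/
private lemma h_nonneg : ∀ s : ℝ, 0 ≤ s →
    0 ≤ (s ^ 2 / 6 + 2) * (Real.exp s - 1) - s * (Real.exp s + 1) := by
  have d3 : ∀ x : ℝ, HasDerivAt (fun s => Real.exp s * (s ^ 2 / 6 - s / 3 + 1 / 3) - 1 / 3)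
      (Real.exp x * (x ^ 2 / 6)) x := by
    intro x
    have := ((Real.hasDerivAt_exp x).mul
      (((hasDerivAt_pow 2 x).div_const 6).sub ((hasDerivAt_id x).div_const 3) |>.add_const
        (1/3))).sub_const (1/3)
    refine this.congr_deriv ?_; simp only [id_eq, Pi.sub_apply]; ring
  have h2 : ∀ s : ℝ, 0 ≤ s → 0 ≤ Real.exp s * (s ^ 2 / 6 - s / 3 + 1 / 3) - 1 / 3 := by
    apply nonneg_of_hasDerivAt d3 (by simp)
    intro x hx
    positivity
  have d2 : ∀ x : ℝ, HasDerivAt (fun s => Real.exp s * (s ^ 2 / 6 - 2 * s / 3 + 1) - s / 3 - 1)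
      (Real.exp x * (x ^ 2 / 6 - x / 3 + 1 / 3) - 1 / 3) x := by
    intro x
    have := (((Real.hasDerivAt_exp x).mul
      ((((hasDerivAt_pow 2 x).div_const 6).sub
        (((hasDerivAt_id x).const_mul 2).div_const 3)).add_const 1)).sub
      ((hasDerivAt_id x).div_const 3)).sub_const 1
    refine this.congr_deriv ?_; simp; ring
  have h1 : ∀ s : ℝ, 0 ≤ s → 0 ≤ Real.exp s * (s ^ 2 / 6 - 2 * s / 3 + 1) - s / 3 - 1 :=
    nonneg_of_hasDerivAt d2 (by simp) h2
  have d1 : ∀ x : ℝ, HasDerivAt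
      (fun s => (s ^ 2 / 6 + 2) * (Real.exp s - 1) - s * (Real.exp s + 1))
      (Real.exp x * (x ^ 2 / 6 - 2 * x / 3 + 1) - x / 3 - 1) x := by
    intro x
    have := ((((hasDerivAt_pow 2 x).div_const 6).add_const 2).mul
      ((Real.hasDerivAt_exp x).sub_const 1)).sub
      ((hasDerivAt_id x).mul ((Real.hasDerivAt_exp x).add_const 1))
    refine this.congr_deriv ?_; simp; ring
  exact nonneg_of_hasDerivAt d1 (by simp) h1

/-- `h s ≤ s⁵·eˢ/360` for `s ≥ 0`. -/
private lemma h_upper : ∀ s : ℝ, 0 ≤ s →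
    (s ^ 2 / 6 + 2) * (Real.exp s - 1) - s * (Real.exp s + 1) ≤ s ^ 5 * Real.exp s / 360 := by
  -- H s = s⁵ eˢ/360 − h s, show H ≥ 0
  have d3 : ∀ x : ℝ, HasDerivAt
      (fun s => (s ^ 5 + 10 * s ^ 4 + 20 * s ^ 3) * Real.exp s / 360
        - (Real.exp s * (s ^ 2 / 6 - s / 3 + 1 / 3) - 1 / 3))
      ((x ^ 5 + 15 * x ^ 4 + 60 * x ^ 3 + 60 * x ^ 2) * Real.exp x / 360
        - Real.exp x * (x ^ 2 / 6)) x := by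
    intro x
    have hp : HasDerivAt (fun s : ℝ => s ^ 5 + 10 * s ^ 4 + 20 * s ^ 3)
        (5 * x ^ 4 + 40 * x ^ 3 + 60 * x ^ 2) x := by
      have := ((hasDerivAt_pow 5 x).add ((hasDerivAt_pow 4 x).const_mul 10)).add
        ((hasDerivAt_pow 3 x).const_mul 20)
      refine this.congr_deriv ?_; push_cast; ring
    have := ((hp.mul (Real.hasDerivAt_exp x)).div_const 360).sub
      (((Real.hasDerivAt_exp x).mul
        (((hasDerivAt_pow 2 x).div_const 6).sub ((hasDerivAt_id x).div_const 3) |>.add_const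
          (1/3))).sub_const (1/3))
    refine this.congr_deriv ?_; simp; ring
  have h2 : ∀ s : ℝ, 0 ≤ s → 0 ≤ (s ^ 5 + 10 * s ^ 4 + 20 * s ^ 3) * Real.exp s / 360
      - (Real.exp s * (s ^ 2 / 6 - s / 3 + 1 / 3) - 1 / 3) := by
    apply nonneg_of_hasDerivAt d3 (by norm_num)
    intro x hx
    have he : 0 < Real.exp x := Real.exp_pos x
    nlinarith [pow_nonneg hx 5, pow_nonneg hx 4, pow_nonneg hx 3, pow_nonneg hx 2]
  have d2 : ∀ x : ℝ, HasDerivAt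
      (fun s => (5 * s ^ 4 + s ^ 5) * Real.exp s / 360
        - (Real.exp s * (s ^ 2 / 6 - 2 * s / 3 + 1) - s / 3 - 1))
      ((x ^ 5 + 10 * x ^ 4 + 20 * x ^ 3) * Real.exp x / 360
        - (Real.exp x * (x ^ 2 / 6 - x / 3 + 1 / 3) - 1 / 3)) x := by
    intro x
    have hp : HasDerivAt (fun s : ℝ => 5 * s ^ 4 + s ^ 5) (20 * x ^ 3 + 5 * x ^ 4) x := by
      have := ((hasDerivAt_pow 4 x).const_mul 5).add (hasDerivAt_pow 5 x)
      refine this.congr_deriv ?_; push_cast; ring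
    have := ((hp.mul (Real.hasDerivAt_exp x)).div_const 360).sub
      ((((Real.hasDerivAt_exp x).mul
        ((((hasDerivAt_pow 2 x).div_const 6).sub
          (((hasDerivAt_id x).const_mul 2).div_const 3)).add_const 1)).sub
        ((hasDerivAt_id x).div_const 3)).sub_const 1)
    refine this.congr_deriv ?_; simp; ring
  have h1 : ∀ s : ℝ, 0 ≤ s → 0 ≤ (5 * s ^ 4 + s ^ 5) * Real.exp s / 360
      - (Real.exp s * (s ^ 2 / 6 - 2 * s / 3 + 1) - s / 3 - 1) :=
    nonneg_of_hasDerivAt d2 (by norm_num) h2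
  have d1 : ∀ x : ℝ, HasDerivAt
      (fun s => s ^ 5 * Real.exp s / 360
        - ((s ^ 2 / 6 + 2) * (Real.exp s - 1) - s * (Real.exp s + 1)))
      ((5 * x ^ 4 + x ^ 5) * Real.exp x / 360
        - (Real.exp x * (x ^ 2 / 6 - 2 * x / 3 + 1) - x / 3 - 1)) x := by
    intro x
    have := (((hasDerivAt_pow 5 x).mul (Real.hasDerivAt_exp x)).div_const 360).sub
      (((((hasDerivAt_pow 2 x).div_const 6).add_const 2).mul
        ((Real.hasDerivAt_exp x).sub_const 1)).sub
      ((hasDerivAt_id x).mul ((Real.hasDerivAt_exp x).add_const 1)))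
    refine this.congr_deriv ?_; simp; ring
  have := nonneg_of_hasDerivAt d1 (by norm_num) h1
  intro s hs
  linarith [this s hs]

/-- For `k > 0`, the inequality
`(k·(log t)² + 1) − ((t+1)/(t−1))·log t + 1 ≥ 0` holds for all `t ∈ (0,∞)`, `t ≠ 1`,
if and only if `k ≥ 1/6`. -/
theorem hencky_aux_ineq_iff (k : ℝ) (hk : 0 < k) :
    (∀ t : ℝ, 0 < t → t ≠ 1 →
      0 ≤ (k * Real.log t ^ 2 + 1) - (t + 1) / (t - 1) * Real.log t + 1) ↔
    1 / 6 ≤ k := by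
  constructor
  · -- forward: inequality for all t forces k ≥ 1/6
    intro H
    by_contra hlt
    push_neg at hlt
    have hεpos : 0 < 1 / 6 - k := by linarith
    set s : ℝ := min 1 (Real.sqrt (60 * (1 / 6 - k))) with hsdef
    have hs0 : 0 < s := lt_min one_pos (Real.sqrt_pos.2 (by positivity))
    have hs1 : s ≤ 1 := min_le_left _ _
    have hs2 : s ^ 2 ≤ 60 * (1 / 6 - k) := by
      have h := min_le_right 1 (Real.sqrt (60 * (1 / 6 - k)))
      rw [← hsdef] at h
      nlinarith [Real.sq_sqrt (by positivity : (0:ℝ) ≤ 60 * (1 / 6 - k)), hs0]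
    set t : ℝ := Real.exp s with htdef
    have ht0 : 0 < t := Real.exp_pos s
    have ht1 : 1 < t := by rw [htdef]; exact Real.one_lt_exp_iff.2 hs0
    have hlog : Real.log t = s := Real.log_exp s
    have hts : s + 1 ≤ t := by rw [htdef]; exact Real.add_one_le_exp s
    have ht3 : t ≤ 3 := by
      have : t ≤ Real.exp 1 := by rw [htdef]; exact Real.exp_le_exp.2 hs1
      linarith [Real.exp_one_lt_d9]
    have hH := H t ht0 (ne_of_gt ht1)
    rw [hlog] at hH
    have hdiv : (t + 1) / (t - 1) * s = ((t + 1) * s) / (t - 1) := by ring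
    rw [hdiv] at hH
    have htm : 0 < t - 1 := by linarith
    have hH2 : (t + 1) * s / (t - 1) ≤ k * s ^ 2 + 2 := by linarith
    rw [div_le_iff₀ htm] at hH2
    have hup := h_upper s hs0.le
    rw [← htdef] at hup
    have key : (1 / 6 - k) * (s ^ 2 * (t - 1)) ≤ s ^ 5 * t / 360 := by nlinarith [hup, hH2]
    have hst : s ≤ t - 1 := by linarith
    have k1 : (1 / 6 - k) * (s ^ 2 * s) ≤ (1 / 6 - k) * (s ^ 2 * (t - 1)) := by
      apply mul_le_mul_of_nonneg_left _ hεpos.le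
      exact mul_le_mul_of_nonneg_left hst (sq_nonneg s)
    have k2 : s ^ 5 * t ≤ s ^ 5 * 3 := mul_le_mul_of_nonneg_left ht3 (by positivity)
    have k4 : s ^ 3 * s ^ 2 ≤ s ^ 3 * (60 * (1 / 6 - k)) :=
      mul_le_mul_of_nonneg_left hs2 (by positivity)
    have kpos : 0 < (1 / 6 - k) * s ^ 3 := mul_pos hεpos (pow_pos hs0 3)
    nlinarith [key, k1, k2, k4, kpos]
  · -- reverse: k ≥ 1/6 implies the inequality
    intro hk6 t ht0 ht1
    set s : ℝ := Real.log t with hsdef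
    clear_value s
    have hts : t = Real.exp s := by rw [hsdef]; exact (Real.exp_log ht0).symm
    have hs0 : s ≠ 0 := by
      intro h
      apply ht1
      rw [hts, h, Real.exp_zero]
    have hdiv : (t + 1) / (t - 1) * s = ((t + 1) * s) / (t - 1) := by ring
    rw [hdiv]
    rcases lt_or_gt_of_ne hs0 with hneg | hpos
    · -- s < 0, t < 1
      have ht1' : t < 1 := by rw [hts, ← Real.exp_zero]; exact Real.exp_lt_exp.2 hneg
      have htm : t - 1 < 0 := by linarith
      have hA := h_nonneg (-s) (by linarith)
      have hEt : Real.exp (-s) * t = 1 := by rw [hts, ← Real.exp_add]; simp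
      set E := Real.exp (-s) with hE
      have hA' : 0 ≤ (s ^ 2 / 6 + 2) * (E - 1) + s * (E + 1) := by
        have h := hA
        simp only [neg_sq] at h
        linarith
      have hexp : ((s ^ 2 / 6 + 2) * (E - 1) + s * (E + 1)) * t
          = (s ^ 2 / 6 + 2) * (1 - t) + s * (1 + t) := by
        linear_combination (s ^ 2 / 6 + 2 + s) * hEt
      have hmul : 0 ≤ (s ^ 2 / 6 + 2) * (1 - t) + s * (1 + t) := by
        rw [← hexp]; exact mul_nonneg hA' ht0.le
      have hB : (s ^ 2 / 6 + 2) * (t - 1) ≤ s * (1 + t) := by nlinarith [hmul]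
      have hneg2 : (k - 1 / 6) * s ^ 2 * (t - 1) ≤ 0 :=
        mul_nonpos_of_nonneg_of_nonpos
          (mul_nonneg (by linarith) (sq_nonneg s)) (by linarith)
      have hC : (k * s ^ 2 + 2) * (t - 1) ≤ (t + 1) * s := by nlinarith [hB, hneg2]
      have hfin : (t + 1) * s / (t - 1) ≤ k * s ^ 2 + 2 := by
        rw [div_le_iff_of_neg htm]
        linarith
      linarith
    · -- s > 0, t > 1
      have ht1' : 1 < t := by rw [hts]; exact Real.one_lt_exp_iff.2 hpos
      have htm : 0 < t - 1 := by linarith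
      have hA := h_nonneg s hpos.le
      rw [← hts] at hA
      have hpos2 : 0 ≤ (k - 1 / 6) * s ^ 2 * (t - 1) :=
        mul_nonneg (mul_nonneg (by linarith) (sq_nonneg s)) (by linarith)
      have hC : (t + 1) * s ≤ (k * s ^ 2 + 2) * (t - 1) := by nlinarith [hA, hpos2]
      have hfin : (t + 1) * s / (t - 1) ≤ k * s ^ 2 + 2 := by
        rw [div_le_iff₀ htm]
        linarith
      linarith
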